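/- Let d, a₁₁, a₂₂ be strictly positive real numbers and let λ ∈ ℂ satisfy Re λ ≥ 0 and λ ≠ 0. Then every complex root Λ of the polynomial d·Λ⁶ − λa₁₁Λ⁴ + λa₂₂Λ² − λ² satisfies Re Λ ≠ 0; that is, the polynomial has no purely imaginary roots and no zero root. -/
import Mathlib


/-- For `d, a₁₁, a₂₂ > 0` and `λ ∈ ℂ` with `Re λ ≥ 0`, `λ ≠ 0`, every complex
root `Λ` of `dΛ⁶ − λa₁₁Λ⁴ + λa₂₂Λ² − λ²` satisfies `Re Λ ≠ 0`. -/
theorem stmt_7 (d a11 a22 : ℝ) (hd : 0 < d) (h11 : 0 < a11) (h22 : 0 < a22)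
    (lam : ℂ) (hre : 0 ≤ lam.re) (hlam : lam ≠ 0) (Λ : ℂ)
    (hroot : (d : ℂ) * Λ ^ 6 - lam * (a11 : ℂ) * Λ ^ 4
        + lam * (a22 : ℂ) * Λ ^ 2 - lam ^ 2 = 0) :
    Λ.re ≠ 0 := by
  intro h
  obtain ⟨x, y⟩ := lam
  obtain ⟨s, t⟩ := Λ
  simp only [Complex.ofReal_re] at hre
  have hlam' : ¬(x = 0 ∧ y = 0) := by
    intro ⟨hx0, hy0⟩
    exact hlam (by simp [Complex.ext_iff, hx0, hy0])
  simp only at h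
  subst h
  rw [Complex.ext_iff] at hroot
  simp only [Complex.add_re, Complex.sub_re, Complex.mul_re, Complex.mul_im,
    Complex.add_im, Complex.sub_im, Complex.ofReal_re, Complex.ofReal_im,
    Complex.zero_re, Complex.zero_im, pow_succ, pow_zero, one_mul] at hroot
  obtain ⟨h1, h2⟩ := hroot
  ring_nf at h1 h2
  by_cases htz : t = 0
  · subst htz
    ring_nf at h1 h2
    apply hlam'
    have h4 : x ^ 4 = 0 := by nlinarith [sq_nonneg (x * y), sq_nonneg x]
    have hx0 : x = 0 := by
      have := pow_eq_zero_iff (n := 4) (by norm_num) |>.mp h4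
      exact this
    refine ⟨hx0, ?_⟩
    subst hx0
    nlinarith [sq_nonneg y]
  · have ht2 : 0 < t ^ 2 := by positivity
    have hB : 0 < t ^ 2 * a22 + t ^ 4 * a11 + 2 * x := by
      nlinarith [mul_pos h11 (mul_pos ht2 ht2), mul_pos h22 ht2]
    have hyB : y * (t ^ 2 * a22 + t ^ 4 * a11 + 2 * x) = 0 := by linear_combination -h2
    have hy0 : y = 0 := by
      rcases mul_eq_zero.mp hyB with hy | hB'
      · exact hy
      · exact absurd hB' (ne_of_gt hB)
    subst hy0
    nlinarith [pow_pos ht2 3, sq_nonneg x,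
      mul_nonneg (mul_nonneg ht2.le hre) h22.le,
      mul_nonneg (mul_nonneg (pow_pos ht2 2).le hre) h11.le]
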